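/- For all strings S and T over an alphabet with decidable equality, the delete–insert edit distance satisfies d_DI(S,T) = |S| + |T| − 2·LCSS(S,T), where |S| and |T| denote the lengths of S and T. -/

import Mathlib

/-- `StepsIn R k S T` holds if there is a sequence of exactly `k` steps of the
relation `R` transforming `S` into `T`. -/
def StepsIn {α : Type*} (R : List α → List α → Prop) : ℕ → List α → List α → Prop
  | 0, S, T => S = T
  | n + 1, S, T => ∃ M, R S M ∧ StepsIn R n M T

/-- A single delete or insert operation on a string. -/
inductive DIStep {α : Type*} : List α → List α → Prop
  | del (U V : List α) (c : α) : DIStep (U ++ [c] ++ V) (U ++ V)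
  | ins (U V : List α) (c : α) : DIStep (U ++ V) (U ++ [c] ++ V)

/-- The delete–insert edit distance: the minimum number of single-character
deletions and insertions transforming `S` into `T`. -/
noncomputable def dDI {α : Type*} (S T : List α) : ℕ :=
  sInf {n | StepsIn DIStep n S T}

/-- The length of a longest common subsequence of `S` and `T`. -/
noncomputable def lcss {α : Type*} (S T : List α) : ℕ :=
  sSup {n | ∃ L : List α, L.Sublist S ∧ L.Sublist T ∧ L.length = n}

lemma bddAbove_lcssSet {α : Type*} (S T : List α) :
    BddAbove {n | ∃ L : List α, L.Sublist S ∧ L.Sublist T ∧ L.length = n} :=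
  ⟨S.length, fun n ⟨L, hS, _, hn⟩ => hn ▸ hS.length_le⟩

lemma lcssSet_nonempty {α : Type*} (S T : List α) :
    {n | ∃ L : List α, L.Sublist S ∧ L.Sublist T ∧ L.length = n}.Nonempty :=
  ⟨0, [], List.nil_sublist _, List.nil_sublist _, rfl⟩

lemma exists_lcss {α : Type*} (S T : List α) :
    ∃ L : List α, L.Sublist S ∧ L.Sublist T ∧ L.length = lcss S T :=
  Nat.sSup_mem (lcssSet_nonempty S T) (bddAbove_lcssSet S T)

lemma le_lcss {α : Type*} {S T L : List α} (h1 : L.Sublist S) (h2 : L.Sublist T) :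
    L.length ≤ lcss S T :=
  le_csSup (bddAbove_lcssSet S T) ⟨L, h1, h2, rfl⟩

lemma StepsIn.trans' {α : Type*} {R : List α → List α → Prop} {m n : ℕ}
    {S M T : List α} (h1 : StepsIn R m S M) (h2 : StepsIn R n M T) :
    StepsIn R (m + n) S T := by
  induction m generalizing S with
  | zero => rw [Nat.zero_add]; cases h1; exact h2
  | succ m ih =>
    obtain ⟨M', hR, hs⟩ := h1
    rw [Nat.succ_add]
    exact ⟨M', hR, ih hs⟩

lemma DIStep.cons' {α : Type*} {S T : List α} (a : α) (h : DIStep S T) :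
    DIStep (a :: S) (a :: T) := by
  cases h with
  | del U V c => exact DIStep.del (a :: U) V c
  | ins U V c => exact DIStep.ins (a :: U) V c

lemma StepsIn.cons' {α : Type*} {n : ℕ} {S T : List α} (a : α)
    (h : StepsIn DIStep n S T) : StepsIn DIStep n (a :: S) (a :: T) := by
  induction n generalizing S with
  | zero => cases h; rfl
  | succ n ih =>
    obtain ⟨M, hR, hs⟩ := h
    exact ⟨a :: M, hR.cons' a, ih hs⟩

lemma stepsIn_del {α : Type*} {L S : List α} (h : L.Sublist S) :
    StepsIn DIStep (S.length - L.length) S L := by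
  induction h with
  | slnil => rfl
  | cons a h ih =>
    rename_i l₁ l₂
    have hle : l₁.length ≤ l₂.length := h.length_le
    have : (a :: l₂).length - l₁.length = (l₂.length - l₁.length) + 1 := by
      simp; omega
    rw [this]
    exact ⟨l₂, DIStep.del [] l₂ a, ih⟩
  | cons_cons a h ih =>
    rename_i l₁ l₂
    have : (a :: l₂).length - (a :: l₁).length = l₂.length - l₁.length := by simp
    rw [this]
    exact ih.cons' a

lemma stepsIn_ins {α : Type*} {L T : List α} (h : L.Sublist T) :
    StepsIn DIStep (T.length - L.length) L T := by
  induction h with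
  | slnil => rfl
  | cons a h ih =>
    rename_i l₁ l₂
    have hle : l₁.length ≤ l₂.length := h.length_le
    have h1 : (a :: l₂).length - l₁.length = (l₂.length - l₁.length) + 1 := by
      simp; omega
    rw [h1]
    have hstep : StepsIn DIStep 1 l₂ (a :: l₂) := ⟨a :: l₂, DIStep.ins [] l₂ a, rfl⟩
    exact ih.trans' hstep
  | cons_cons a h ih =>
    rename_i l₁ l₂
    have : (a :: l₂).length - (a :: l₁).length = l₂.length - l₁.length := by simp
    rw [this]
    exact ih.cons' a

lemma drop_mid {α : Type*} {L U V : List α} {c : α} (h : L.Sublist (U ++ [c] ++ V)) :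
    ∃ L' : List α, L'.Sublist (U ++ V) ∧ L'.Sublist L ∧ L.length ≤ L'.length + 1 := by
  rw [List.append_assoc] at h
  obtain ⟨L1, L2, rfl, h1, h2⟩ := List.sublist_append_iff.mp h
  have h2' : L2.Sublist (c :: V) := by simpa using h2
  rcases List.sublist_cons_iff.mp h2' with h2'' | ⟨r, rfl, hr⟩
  · exact ⟨L1 ++ L2, h1.append h2'', List.Sublist.refl _, by simp⟩
  · refine ⟨L1 ++ r, h1.append hr, ?_, by simp; omega⟩
    exact (List.Sublist.refl L1).append (List.sublist_cons_self c r)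

lemma mid_sublist {α : Type*} (U V : List α) (c : α) :
    (U ++ V).Sublist (U ++ [c] ++ V) := by
  rw [List.append_assoc]
  exact (List.Sublist.refl U).append (List.sublist_cons_self c V)

lemma length_add_length_le {α : Type*} {k : ℕ} {S T : List α}
    (h : StepsIn DIStep k S T) :
    S.length + T.length ≤ k + 2 * lcss S T := by
  induction k generalizing S with
  | zero =>
    cases h
    have : T.length ≤ lcss T T := le_lcss (List.Sublist.refl T) (List.Sublist.refl T)
    omega
  | succ k ih =>
    obtain ⟨M, hstep, hs⟩ := h
    have hM := ih hs
    cases hstep with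
    | del U V c =>
      have h1 : lcss (U ++ V) T ≤ lcss (U ++ [c] ++ V) T := by
        obtain ⟨L, hL1, hL2, hL3⟩ := exists_lcss (U ++ V) T
        rw [← hL3]
        exact le_lcss (hL1.trans (mid_sublist U V c)) hL2
      simp only [List.length_append, List.length_cons, List.length_nil] at *
      omega
    | ins U V c =>
      have h1 : lcss (U ++ [c] ++ V) T ≤ lcss (U ++ V) T + 1 := by
        obtain ⟨L, hL1, hL2, hL3⟩ := exists_lcss (U ++ [c] ++ V) T
        obtain ⟨L', hL'1, hL'2, hlen⟩ := drop_mid hL1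
        have := le_lcss hL'1 (hL'2.trans hL2)
        omega
      simp only [List.length_append, List.length_cons, List.length_nil] at *
      omega

theorem dDI_eq_length_add_length_sub_two_mul_lcss
    {α : Type*} [DecidableEq α] (S T : List α) :
    dDI S T = S.length + T.length - 2 * lcss S T := by
  obtain ⟨L, h1, h2, h3⟩ := exists_lcss S T
  have hlS : L.length ≤ S.length := h1.length_le
  have hlT : L.length ≤ T.length := h2.length_le
  have hmem : StepsIn DIStep ((S.length - L.length) + (T.length - L.length)) S T :=
    (stepsIn_del h1).trans' (stepsIn_ins h2)
  have hle : dDI S T ≤ (S.length - L.length) + (T.length - L.length) :=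
    Nat.sInf_le hmem
  have hne : {n | StepsIn DIStep n S T}.Nonempty := ⟨_, hmem⟩
  have hmem' : StepsIn DIStep (dDI S T) S T := Nat.sInf_mem hne
  have hge := length_add_length_le hmem'
  omega
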